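/- Let p be an odd prime and let r be an integer with 1 ≤ r < p-1. Then the r-restricted Stirling number of the second kind S(r+p, p)_{≤r} is divisible by p. -/

import Mathlib

open Finset Equiv
open scoped Fin.NatCast

namespace StirlingAux

variable {n k r p : ℕ}

/-- The order iso of `Finset (Fin n)` induced by a permutation. -/
def permOrderIso (σ : Equiv.Perm (Fin n)) : Finset (Fin n) ≃o Finset (Fin n) where
  toEquiv := σ.finsetCongr
  map_rel_iff' := by
    intro s t
    simp [Equiv.finsetCongr_apply, Finset.map_subset_map]

/-- Action of a permutation on a finpartition of `univ`. -/
def pact (σ : Equiv.Perm (Fin n)) (P : Finpartition (Finset.univ : Finset (Fin n))) :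
    Finpartition (Finset.univ : Finset (Fin n)) :=
  (P.map (permOrderIso σ)).copy (by
    show Finset.univ.map σ.toEmbedding = Finset.univ
    exact Finset.map_univ_equiv σ)

lemma parts_pact (σ : Equiv.Perm (Fin n)) (P : Finpartition (Finset.univ : Finset (Fin n))) :
    (pact σ P).parts = P.parts.image (Finset.image σ) := by
  show (P.parts.map _) = _
  ext b
  simp only [Finset.mem_map, Finset.mem_image]
  constructor
  · rintro ⟨a, ha, rfl⟩
    exact ⟨a, ha, by simp [permOrderIso, Equiv.finsetCongr_apply, Finset.map_eq_image]⟩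
  · rintro ⟨a, ha, rfl⟩
    exact ⟨a, ha, by simp [permOrderIso, Equiv.finsetCongr_apply, Finset.map_eq_image]⟩

instance : MulAction (Equiv.Perm (Fin n)) (Finpartition (Finset.univ : Finset (Fin n))) where
  smul := pact
  one_smul P := by
    apply Finpartition.ext
    show (pact 1 P).parts = P.parts
    rw [parts_pact]
    have h1 : (⇑(1 : Equiv.Perm (Fin n))) = (id : Fin n → Fin n) := rfl
    rw [h1]
    have h2 : Finset.image (id : Fin n → Fin n) = id := funext fun s => Finset.image_id
    rw [h2, Finset.image_id]
  mul_smul σ τ P := by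
    apply Finpartition.ext
    show (pact (σ * τ) P).parts = (pact σ (pact τ P)).parts
    rw [parts_pact, parts_pact, parts_pact, Finset.image_image]
    congr 1
    funext a
    simp only [Function.comp_apply, Finset.image_image]
    congr 1

lemma parts_smul (σ : Equiv.Perm (Fin n)) (P : Finpartition (Finset.univ : Finset (Fin n))) :
    (σ • P).parts = P.parts.image (Finset.image σ) :=
  parts_pact σ P

instance : MulAction (Equiv.Perm (Fin n))
    {P : Finpartition (Finset.univ : Finset (Fin n)) //
      P.parts.card = k ∧ ∀ b ∈ P.parts, b.card ≤ r} where
  smul σ P := ⟨σ • P.1, by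
    constructor
    · rw [parts_smul, Finset.card_image_of_injective _ (Finset.image_injective σ.injective),
        P.2.1]
    · intro b hb
      rw [parts_smul, Finset.mem_image] at hb
      obtain ⟨a, ha, rfl⟩ := hb
      rw [Finset.card_image_of_injective _ σ.injective]
      exact P.2.2 a ha⟩
  one_smul P := Subtype.ext (one_smul _ P.1)
  mul_smul σ τ P := Subtype.ext (mul_smul σ τ P.1)

/-- The basic rotation permutation of `Fin (r + p)`, fixing the first `r` points and
rotating the last `p`. -/
def sig (r p : ℕ) : Equiv.Perm (Fin (r + p)) :=
  finSumFinEquiv.permCongr (Equiv.sumCongr (Equiv.refl (Fin r)) (finRotate p))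

lemma finRotate_pow_apply [NeZero p] (a : ℕ) (j : Fin p) :
    ((finRotate p) ^ a) j = j + (a : Fin p) := by
  obtain ⟨m, rfl⟩ := Nat.exists_eq_succ_of_ne_zero (NeZero.ne p)
  induction a with
  | zero => simp
  | succ a ih =>
    rw [pow_succ', Equiv.Perm.mul_apply, ih, finRotate_succ_apply, Nat.cast_add, Nat.cast_one,
      add_assoc]

lemma sig_apply_inl (i : Fin r) :
    sig r p (finSumFinEquiv (Sum.inl i)) = finSumFinEquiv (Sum.inl i) := by
  simp [sig]

lemma sig_apply_inr (j : Fin p) :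
    sig r p (finSumFinEquiv (Sum.inr j)) = finSumFinEquiv (Sum.inr (finRotate p j)) := by
  simp [sig]

lemma sig_pow_inr (a : ℕ) (j : Fin p) :
    ((sig r p) ^ a) (finSumFinEquiv (Sum.inr j)) = finSumFinEquiv (Sum.inr (((finRotate p) ^ a) j)) := by
  induction a with
  | zero => simp
  | succ a ih =>
    rw [pow_succ', Equiv.Perm.mul_apply, ih, sig_apply_inr, pow_succ', Equiv.Perm.mul_apply]

lemma sig_pow_inl (a : ℕ) (i : Fin r) :
    ((sig r p) ^ a) (finSumFinEquiv (Sum.inl i)) = finSumFinEquiv (Sum.inl i) := by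
  induction a with
  | zero => simp
  | succ a ih =>
    rw [pow_succ', Equiv.Perm.mul_apply, ih, sig_apply_inl]

lemma sig_pow_p (hp : p ≠ 0) : (sig r p)^p = 1 := by
  haveI : NeZero p := ⟨hp⟩
  ext x
  obtain ⟨y, rfl⟩ : ∃ y, finSumFinEquiv y = x := ⟨finSumFinEquiv.symm x, by simp⟩
  cases y with
  | inl i => rw [sig_pow_inl]; rfl
  | inr j =>
    rw [sig_pow_inr, finRotate_pow_apply]
    simp

end StirlingAux

/-- `r`-restricted Stirling number of the second kind: number of partitions of an
`n`-set into `k` nonempty blocks, each of size at most `r`. -/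
noncomputable def stirlingRes (n k r : ℕ) : ℕ :=
  Nat.card {P : Finpartition (Finset.univ : Finset (Fin n)) //
    P.parts.card = k ∧ ∀ b ∈ P.parts, b.card ≤ r}

theorem stmt_11 (p r : ℕ) (hp : p.Prime) (hodd : Odd p) (h1 : 1 ≤ r) (h2 : r < p - 1) :
    p ∣ stirlingRes (r + p) p r := by
  classical
  haveI : Fact p.Prime := ⟨hp⟩
  haveI : NeZero p := ⟨hp.pos.ne'⟩
  set T := {P : Finpartition (Finset.univ : Finset (Fin (r + p))) //
    P.parts.card = p ∧ ∀ b ∈ P.parts, b.card ≤ r} with hT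
  set σ : Equiv.Perm (Fin (r + p)) := StirlingAux.sig r p with hσ
  have hσp : σ ^ p = 1 := StirlingAux.sig_pow_p hp.pos.ne'
  set H := Subgroup.zpowers σ with hH
  have hPG : IsPGroup p H := by
    intro g
    refine ⟨1, ?_⟩
    obtain ⟨z, hz⟩ := g.2
    have hcoe : ((g ^ p ^ 1 : H) : Equiv.Perm (Fin (r + p))) = 1 := by
      push_cast
      rw [pow_one, ← hz, ← zpow_natCast (σ ^ z) p, ← zpow_mul, mul_comm, zpow_mul,
        zpow_natCast, hσp, one_zpow]
    exact Subtype.ext hcoe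
  -- no fixed points
  have hnofix : ∀ x : T, x ∉ MulAction.fixedPoints H T := by
    intro x hx
    have hfix := hx ⟨σ, Subgroup.mem_zpowers σ⟩
    rw [Subgroup.smul_def] at hfix
    have hP : σ • (x.1) = x.1 := congrArg Subtype.val hfix
    obtain ⟨P, hPcard, hPsize⟩ := x
    simp only at hP
    have hparts : P.parts.image (Finset.image σ) = P.parts := by
      have h := congrArg Finpartition.parts hP
      rwa [StirlingAux.parts_smul] at h
    have hA : ∀ c ∈ P.parts, Finset.image σ c ∈ P.parts := by
      intro c hc
      rw [← hparts]
      exact Finset.mem_image_of_mem _ hc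
    -- basic image identities
    have hGadd : ∀ (a c : ℕ) (s : Finset (Fin (r + p))),
        Finset.image (⇑(σ ^ (a + c))) s = Finset.image (⇑(σ ^ a)) (Finset.image (⇑(σ ^ c)) s) := by
      intro a c s
      rw [pow_add, Equiv.Perm.coe_mul, Finset.image_image]
    have hGzero : ∀ s : Finset (Fin (r + p)), Finset.image (⇑(σ ^ 0)) s = s := by
      intro s
      simp
    have hGmod : ∀ (a : ℕ) (s : Finset (Fin (r + p))),
        Finset.image (⇑(σ ^ a)) s = Finset.image (⇑(σ ^ (a % p))) s := by
      intro a s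
      rw [← pow_eq_pow_mod a hσp]
    have hGp : ∀ s : Finset (Fin (r + p)), Finset.image (⇑(σ ^ p)) s = s := by
      intro s
      rw [hσp]; simp
    have hGmem : ∀ (a : ℕ), ∀ c ∈ P.parts, Finset.image (⇑(σ ^ a)) c ∈ P.parts := by
      intro a
      induction a with
      | zero => intro c hc; rw [hGzero]; exact hc
      | succ a ih =>
        intro c hc
        have : Finset.image (⇑(σ ^ (a + 1))) c
            = Finset.image (⇑σ) (Finset.image (⇑(σ ^ a)) c) := by
          rw [pow_succ', Equiv.Perm.coe_mul, ← Finset.image_image]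
        rw [this]
        exact hA _ (ih c hc)
    -- the fixed element and its block
    have hr0 : 0 < r := h1
    set e0 : Fin (r + p) := finSumFinEquiv (Sum.inl (⟨0, hr0⟩ : Fin r)) with he0def
    set x0 : Fin (r + p) := finSumFinEquiv (Sum.inr (0 : Fin p)) with hx0def
    set b0 : Finset (Fin (r + p)) := P.part e0 with hb0def
    set b : Finset (Fin (r + p)) := P.part x0 with hbdef
    have hb0 : b0 ∈ P.parts := P.part_mem.mpr (Finset.mem_univ _)
    have hb : b ∈ P.parts := P.part_mem.mpr (Finset.mem_univ _)
    have he0 : e0 ∈ b0 := P.mem_part (Finset.mem_univ _)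
    have hxb : x0 ∈ b := P.mem_part (Finset.mem_univ _)
    have hσe0 : σ e0 = e0 := StirlingAux.sig_apply_inl _
    have hb0fix : Finset.image σ b0 = b0 := by
      apply P.eq_of_mem_parts (hA b0 hb0) hb0 (a := e0)
      · rw [← hσe0]
        exact Finset.mem_image_of_mem _ he0
      · exact he0
    by_cases hb1 : Finset.image (⇑σ) b = b
    · -- block b contains the whole p-orbit: too big
      have hall : ∀ m : ℕ, finSumFinEquiv (Sum.inr ((m : Fin p))) ∈ b := by
        intro m
        induction m with
        | zero => simpa [hx0def] using hxb
        | succ m ih =>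
          have h2' := Finset.mem_image_of_mem (⇑σ) ih
          rw [hb1] at h2'
          rw [StirlingAux.sig_apply_inr] at h2'
          have : finRotate p ((m : Fin p)) = ((m + 1 : ℕ) : Fin p) := by
            have := StirlingAux.finRotate_pow_apply (p := p) 1 ((m : Fin p))
            rw [pow_one] at this
            rw [this, Nat.cast_add, Nat.cast_one]
          rwa [this] at h2'
      have hsub : (Finset.univ.image (fun j : Fin p => finSumFinEquiv (Sum.inr j))) ⊆ b := by
        intro y hy
        rw [Finset.mem_image] at hy
        obtain ⟨j, -, rfl⟩ := hy
        have := hall j.val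
        rwa [Fin.cast_val_eq_self] at this
      have hple : p ≤ b.card := by
        calc p = (Finset.univ.image (fun j : Fin p => finSumFinEquiv (Sum.inr j))).card := by
              rw [Finset.card_image_of_injective _
                (fun a b hab => Sum.inr_injective (finSumFinEquiv.injective hab))]
              simp
          _ ≤ b.card := Finset.card_le_card hsub
      have := hPsize b hb
      omega
    · -- b moves; its orbit accounts for all p blocks, contradicting the fixed block b0
      have hG1 : ∀ d : ℕ, ¬ p ∣ d → Finset.image (⇑(σ ^ d)) b = b → False := by
        intro d hd hdb
        set d' := d % p with hd'def
        have hd'0 : d' ≠ 0 := fun h => hd (Nat.dvd_of_mod_eq_zero h)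
        have hd'p : d' < p := Nat.mod_lt _ hp.pos
        rw [hGmod d b] at hdb
        have hmul : ∀ m : ℕ, Finset.image (⇑(σ ^ (d' * m))) b = b := by
          intro m
          induction m with
          | zero => rw [Nat.mul_zero, hGzero]
          | succ m ih =>
            have hm : d' * (m + 1) = d' * m + d' := by ring
            rw [hm, hGadd, hdb, ih]
        have hndvd : ¬ p ∣ d' := by
          intro h
          exact hd'0 (Nat.eq_zero_of_dvd_of_lt h hd'p)
        have hcop : Nat.Coprime d' p := ((hp.coprime_iff_not_dvd).mpr hndvd).symm
        have hferm : d' ^ (p - 1) ≡ 1 [MOD p] := by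
          have h := Nat.ModEq.pow_totient hcop
          rwa [Nat.totient_prime hp] at h
        have hmod1 : (d' * d' ^ (p - 2)) % p = 1 := by
          have hpow : d' * d' ^ (p - 2) = d' ^ (p - 1) := by
            rw [← pow_succ']
            congr 1
            have := hp.two_le
            omega
          rw [hpow]
          have h1p : (1 : ℕ) % p = 1 := Nat.mod_eq_of_lt hp.one_lt
          unfold Nat.ModEq at hferm
          rw [hferm, h1p]
        have hone : Finset.image (⇑(σ ^ 1)) b = b := by
          have h := hmul (d' ^ (p - 2))
          rw [hGmod, hmod1] at h
          exact h
        rw [pow_one] at hone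
        exact hb1 hone
      set g : Fin p → Finset (Fin (r + p)) := fun j => Finset.image (⇑(σ ^ j.val)) b with hgdef
      have hginj : Function.Injective g := by
        intro j l hjl
        by_contra hne
        apply hG1 (p - l.val + j.val)
        · intro hdvd
          have hj := j.isLt
          have hl := l.isLt
          obtain ⟨c, hc⟩ := hdvd
          have hjl2 : j.val = l.val := by
            rcases c with _ | _ | c
            · omega
            · omega
            · have hc' : p * (c + 1 + 1) = p * c + 2 * p := by ring
              omega
          exact hne (Fin.ext hjl2)
        · have h3 : Finset.image (⇑(σ ^ (p - l.val + j.val))) b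
              = Finset.image (⇑(σ ^ (p - l.val))) (Finset.image (⇑(σ ^ j.val)) b) := hGadd _ _ _
          rw [h3]
          have hjl' : Finset.image (⇑(σ ^ j.val)) b = Finset.image (⇑(σ ^ l.val)) b := hjl
          rw [hjl', ← hGadd]
          have : p - l.val + l.val = p := by
            have := l.isLt
            omega
          rw [this, hGp]
      have hrange : Finset.univ.image g = P.parts := by
        apply Finset.eq_of_subset_of_card_le
        · intro c hc
          rw [Finset.mem_image] at hc
          obtain ⟨j, -, rfl⟩ := hc
          exact hGmem _ b hb
        · rw [hPcard, Finset.card_image_of_injective _ hginj]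
          simp
      have hb0mem : b0 ∈ Finset.univ.image g := by rw [hrange]; exact hb0
      rw [Finset.mem_image] at hb0mem
      obtain ⟨j, -, hj⟩ := hb0mem
      -- image σ (g j) = g j
      have hstep : Finset.image (⇑(σ ^ (1 + j.val))) b = Finset.image (⇑(σ ^ j.val)) b := by
        rw [hGadd, pow_one]
        show Finset.image (⇑σ) (g j) = g j
        rw [hj, hb0fix]
      have h3 : Finset.image (⇑(σ ^ (p - j.val + (1 + j.val)))) b
          = Finset.image (⇑(σ ^ (p - j.val + j.val))) b := by
        rw [hGadd (p - j.val) (1 + j.val), hGadd (p - j.val) j.val, hstep]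
      have e1 : p - j.val + (1 + j.val) = p + 1 := by
        have := j.isLt
        omega
      have e2 : p - j.val + j.val = p := by
        have := j.isLt
        omega
      rw [e1, e2, hGp] at h3
      apply hG1 (p + 1) ?_ h3
      intro hdvd
      have : p ∣ 1 := (Nat.dvd_add_right dvd_rfl).mp hdvd
      have := Nat.le_of_dvd one_pos this
      have := hp.two_le
      omega
  haveI : Finite T := by
    rw [hT]
    infer_instance
  have hmod := hPG.card_modEq_card_fixedPoints T
  haveI : IsEmpty (MulAction.fixedPoints H T) := ⟨fun x => hnofix x.1 x.2⟩
  have hzero : Nat.card (MulAction.fixedPoints H T) = 0 := Nat.card_of_isEmpty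
  rw [hzero] at hmod
  have hdvd : p ∣ Nat.card T := (Nat.modEq_zero_iff_dvd).mp hmod
  exact hdvd
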